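/- Interior discrete entropy inequality (Lemma 5.1, first inequality): for every convex entropy η ∈ C²(ℝ), every j = 1,…,N−1 and every n = 0,…,M, the solution of the scheme satisfies (η(u_j^{n+1}) − η(u_jⁿ))/Δt + (Q(u_jⁿ, u_{j+1}ⁿ) − Q(u_{j−1}ⁿ, u_jⁿ))/Δx − γ·η′(u_j^{n+1})·P_jⁿ ≤ 0. -/

import Mathlib

open intervalIntegral Set

private lemma monoDerivNonneg {f : ℝ → ℝ} (hm : Monotone f) (hd : Differentiable ℝ f) (x : ℝ) :
    0 ≤ deriv f x := by
  have h := (hd x).hasDerivAt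
  rw [hasDerivAt_iff_tendsto_slope] at h
  have h' : Filter.Tendsto (slope f x) (nhdsWithin x (Set.Ioi x)) (nhds (deriv f x)) :=
    h.mono_left (nhdsWithin_mono x fun y hy => ne_of_gt hy)
  refine ge_of_tendsto h' ?_
  filter_upwards [self_mem_nhdsWithin] with y hy
  rw [slope_def_field]
  exact div_nonneg (by linarith [hm (le_of_lt hy)]) (by linarith [hy.out])

private lemma idA (η : ℝ → ℝ) (hη : ContDiff ℝ 2 η) {L x R : ℝ} (h1 : L ≤ x) (h2 : x ≤ R) :
    η x - η L - deriv η L * (x - L) = ∫ k in L..R, deriv (deriv η) k * max (x - k) 0 := by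
  have h1' : ContDiff ℝ ((1:ℕ)+1) η := by exact_mod_cast hη
  rw [contDiff_succ_iff_deriv] at h1'
  have hdη : Differentiable ℝ η := h1'.1
  have hη1 : ContDiff ℝ 1 (deriv η) := h1'.2.2
  have hdη' : Differentiable ℝ (deriv η) := hη1.differentiable one_ne_zero
  have hcη'' : Continuous (deriv (deriv η)) := hη1.continuous_deriv le_rfl
  have hcont : Continuous fun k => deriv (deriv η) k * max (x - k) 0 :=
    hcη''.mul ((continuous_const.sub continuous_id).max continuous_const)
  have hsplit : (∫ k in L..x, deriv (deriv η) k * max (x - k) 0)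
      + (∫ k in x..R, deriv (deriv η) k * max (x - k) 0)
      = ∫ k in L..R, deriv (deriv η) k * max (x - k) 0 :=
    integral_add_adjacent_intervals (hcont.intervalIntegrable _ _) (hcont.intervalIntegrable _ _)
  have h2z : (∫ k in x..R, deriv (deriv η) k * max (x - k) 0) = 0 := by
    rw [intervalIntegral.integral_congr (g := fun _ => (0:ℝ)) ?_]
    · simp
    · intro k hk
      rw [Set.uIcc_of_le h2] at hk
      have : max (x - k) 0 = 0 := max_eq_right (by linarith [hk.1])
      simp [this]
  have h1z : (∫ k in L..x, deriv (deriv η) k * max (x - k) 0)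
      = ∫ k in L..x, ((x - k) * deriv (deriv η) k) := by
    apply intervalIntegral.integral_congr
    intro k hk
    rw [Set.uIcc_of_le h1] at hk
    have : max (x - k) 0 = x - k := max_eq_left (by linarith [hk.2])
    simp only [this]; ring
  have hftc := intervalIntegral.integral_eq_sub_of_hasDerivAt
      (f := fun k => (x - k) * deriv η k + η k)
      (f' := fun k => (x - k) * deriv (deriv η) k) (a := L) (b := x) ?_ ?_
  · rw [← hsplit, h2z, h1z, hftc]; ring
  · intro k hk
    have hprod : HasDerivAt (fun k => (x - k) * deriv η k)
        ((-1) * deriv η k + (x - k) * deriv (deriv η) k) k :=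
      ((hasDerivAt_id k).const_sub x).mul (hdη' k).hasDerivAt
    have := hprod.add (hdη k).hasDerivAt
    exact this.congr_deriv (by ring)
  · exact ((continuous_const.sub continuous_id).mul hcη'').intervalIntegrable _ _

private lemma idA' (η : ℝ → ℝ) (hη : ContDiff ℝ 2 η) {L R x y : ℝ}
    (hLx : L ≤ x) (hxR : x ≤ R) (hLy : L ≤ y) (hyR : y ≤ R) :
    η x - η y = deriv η L * (x - y)
      + ∫ k in L..R, deriv (deriv η) k * (max (x - k) 0 - max (y - k) 0) := by
  have h1' : ContDiff ℝ ((1:ℕ)+1) η := by exact_mod_cast hη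
  rw [contDiff_succ_iff_deriv] at h1'
  have hη1 : ContDiff ℝ 1 (deriv η) := h1'.2.2
  have hcη'' : Continuous (deriv (deriv η)) := hη1.continuous_deriv le_rfl
  have hx := idA η hη hLx hxR
  have hy := idA η hη hLy hyR
  have hcx : Continuous fun k => deriv (deriv η) k * max (x - k) 0 :=
    hcη''.mul ((continuous_const.sub continuous_id).max continuous_const)
  have hcy : Continuous fun k => deriv (deriv η) k * max (y - k) 0 :=
    hcη''.mul ((continuous_const.sub continuous_id).max continuous_const)
  have hsub : (∫ k in L..R, deriv (deriv η) k * (max (x - k) 0 - max (y - k) 0))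
      = (∫ k in L..R, deriv (deriv η) k * max (x - k) 0)
        - ∫ k in L..R, deriv (deriv η) k * max (y - k) 0 := by
    rw [← intervalIntegral.integral_sub (hcx.intervalIntegrable _ _) (hcy.intervalIntegrable _ _)]
    apply intervalIntegral.integral_congr
    intro k _
    ring
  rw [hsub, ← hx, ← hy]
  ring

private lemma idB_le (η G : ℝ → ℝ) (hη : ContDiff ℝ 2 η) (hG : ContDiff ℝ 1 G)
    {L R a b : ℝ} (hab : a ≤ b) (hLa : L ≤ a) (hbR : b ≤ R) :
    ∫ z in a..b, deriv η z * deriv G z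
      = deriv η L * (G b - G a)
        + ∫ k in L..R, deriv (deriv η) k * (G (max b k) - G (max a k)) := by
  have h1' : ContDiff ℝ ((1:ℕ)+1) η := by exact_mod_cast hη
  rw [contDiff_succ_iff_deriv] at h1'
  have hη1 : ContDiff ℝ 1 (deriv η) := h1'.2.2
  have hdη' : Differentiable ℝ (deriv η) := hη1.differentiable one_ne_zero
  have hcη' : Continuous (deriv η) := hdη'.continuous
  have hcη'' : Continuous (deriv (deriv η)) := hη1.continuous_deriv le_rfl
  have hdG : Differentiable ℝ G := hG.differentiable one_ne_zero
  have hcG' : Continuous (deriv G) := hG.continuous_deriv le_rfl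
  have hcont : Continuous fun k => deriv (deriv η) k * (G (max b k) - G (max a k)) :=
    hcη''.mul (((hdG.continuous).comp (continuous_const.max continuous_id)).sub
      ((hdG.continuous).comp (continuous_const.max continuous_id)))
  have hs1 : (∫ k in L..a, deriv (deriv η) k * (G (max b k) - G (max a k)))
      + (∫ k in a..b, deriv (deriv η) k * (G (max b k) - G (max a k)))
      = ∫ k in L..b, deriv (deriv η) k * (G (max b k) - G (max a k)) :=
    integral_add_adjacent_intervals (hcont.intervalIntegrable _ _) (hcont.intervalIntegrable _ _)
  have hs2 : (∫ k in L..b, deriv (deriv η) k * (G (max b k) - G (max a k)))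
      + (∫ k in b..R, deriv (deriv η) k * (G (max b k) - G (max a k)))
      = ∫ k in L..R, deriv (deriv η) k * (G (max b k) - G (max a k)) :=
    integral_add_adjacent_intervals (hcont.intervalIntegrable _ _) (hcont.intervalIntegrable _ _)
  have p3 : (∫ k in b..R, deriv (deriv η) k * (G (max b k) - G (max a k))) = 0 := by
    rw [intervalIntegral.integral_congr (g := fun _ => (0:ℝ)) ?_]
    · simp
    · intro k hk
      rw [Set.uIcc_of_le hbR] at hk
      have e1 : max b k = k := max_eq_right hk.1
      have e2 : max a k = k := max_eq_right (le_trans hab hk.1)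
      simp [e1, e2]
  have p1 : (∫ k in L..a, deriv (deriv η) k * (G (max b k) - G (max a k)))
      = (deriv η a - deriv η L) * (G b - G a) := by
    have hc : (∫ k in L..a, deriv (deriv η) k * (G (max b k) - G (max a k)))
        = ∫ k in L..a, deriv (deriv η) k * (G b - G a) := by
      apply intervalIntegral.integral_congr
      intro k hk
      rw [Set.uIcc_of_le hLa] at hk
      have e1 : max b k = b := max_eq_left (le_trans hk.2 hab)
      have e2 : max a k = a := max_eq_left hk.2
      simp [e1, e2]
    rw [hc, intervalIntegral.integral_mul_const]
    congr 1
    exact intervalIntegral.integral_eq_sub_of_hasDerivAt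
      (fun k _ => (hdη' k).hasDerivAt) (hcη''.intervalIntegrable _ _)
  have p2 : (∫ k in a..b, deriv (deriv η) k * (G (max b k) - G (max a k)))
      = - (deriv η a * (G b - G a)) + ∫ z in a..b, deriv η z * deriv G z := by
    have hc : (∫ k in a..b, deriv (deriv η) k * (G (max b k) - G (max a k)))
        = ∫ k in a..b, deriv (deriv η) k * (G b - G k) := by
      apply intervalIntegral.integral_congr
      intro k hk
      rw [Set.uIcc_of_le hab] at hk
      have e1 : max b k = b := max_eq_left hk.2
      have e2 : max a k = k := max_eq_right hk.1
      simp [e1, e2]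
    have hftc := intervalIntegral.integral_eq_sub_of_hasDerivAt
        (f := fun k => deriv η k * (G b - G k))
        (f' := fun k => deriv (deriv η) k * (G b - G k) - deriv η k * deriv G k)
        (a := a) (b := b) ?_ ?_
    · have hsub : (∫ k in a..b, (deriv (deriv η) k * (G b - G k) - deriv η k * deriv G k))
          = (∫ k in a..b, deriv (deriv η) k * (G b - G k))
            - ∫ k in a..b, deriv η k * deriv G k := by
        apply intervalIntegral.integral_sub
        · exact (hcη''.mul (continuous_const.sub hdG.continuous)).intervalIntegrable _ _
        · exact (hcη'.mul hcG').intervalIntegrable _ _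
      rw [hc]
      rw [hsub] at hftc
      have : G b - G b = 0 := by ring
      rw [this, mul_zero] at hftc
      linarith [hftc]
    · intro k hk
      have hprod : HasDerivAt (fun k => deriv η k * (G b - G k))
          (deriv (deriv η) k * (G b - G k) + deriv η k * (0 - deriv G k)) k :=
        (hdη' k).hasDerivAt.mul ((hasDerivAt_const k (G b)).sub (hdG k).hasDerivAt)
      exact hprod.congr_deriv (by ring)
    · exact ((hcη''.mul (continuous_const.sub hdG.continuous)).sub
        (hcη'.mul hcG')).intervalIntegrable _ _
  rw [← hs2, ← hs1, p1, p2, p3]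
  ring

private lemma idB (η G : ℝ → ℝ) (hη : ContDiff ℝ 2 η) (hG : ContDiff ℝ 1 G)
    {L R a b : ℝ} (hLa : L ≤ a) (haR : a ≤ R) (hLb : L ≤ b) (hbR : b ≤ R) :
    ∫ z in a..b, deriv η z * deriv G z
      = deriv η L * (G b - G a)
        + ∫ k in L..R, deriv (deriv η) k * (G (max b k) - G (max a k)) := by
  rcases le_total a b with h | h
  · exact idB_le η G hη hG h hLa hbR
  · have hsw := idB_le η G hη hG h hLb haR
    have h1' : ContDiff ℝ ((1:ℕ)+1) η := by exact_mod_cast hη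
    rw [contDiff_succ_iff_deriv] at h1'
    have hη1 : ContDiff ℝ 1 (deriv η) := h1'.2.2
    have hcη'' : Continuous (deriv (deriv η)) := hη1.continuous_deriv le_rfl
    have hdG : Differentiable ℝ G := hG.differentiable one_ne_zero
    have hneg : (∫ k in L..R, deriv (deriv η) k * (G (max b k) - G (max a k)))
        = - ∫ k in L..R, deriv (deriv η) k * (G (max a k) - G (max b k)) := by
      rw [← intervalIntegral.integral_neg]
      apply intervalIntegral.integral_congr
      intro k _
      ring
    rw [intervalIntegral.integral_symm a b] at hsw
    rw [hneg]
    linarith [hsw]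

private lemma tangentLine (η : ℝ → ℝ) (hη : ContDiff ℝ 2 η) (hconv : ConvexOn ℝ Set.univ η)
    (x y : ℝ) : η y + deriv η y * (x - y) ≤ η x := by
  have hdη : Differentiable ℝ η := hη.differentiable (by norm_num)
  rcases lt_trichotomy y x with h | h | h
  · have hd := hconv.deriv_le_slope (Set.mem_univ y) (Set.mem_univ x) h (hdη y)
    rw [slope_def_field] at hd
    have := (le_div_iff₀ (by linarith : (0:ℝ) < x - y)).mp hd
    linarith
  · simp [h]
  · have hd := hconv.slope_le_deriv (Set.mem_univ x) (Set.mem_univ y) h (hdη y)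
    rw [slope_def_field] at hd
    have := (div_le_iff₀ (by linarith : (0:ℝ) < y - x)).mp hd
    linarith

private lemma keyK (F₁ F₂ : ℝ → ℝ) (hF₁ : ContDiff ℝ 1 F₁) (hF₂ : ContDiff ℝ 1 F₂)
    (hmono₁ : ∀ w, 0 ≤ deriv F₁ w) (hmono₂ : ∀ w, deriv F₂ w ≤ 0)
    (lam : ℝ) (hlam : 0 ≤ lam) (hCFL : ∀ w, lam * (deriv F₁ w - deriv F₂ w) ≤ 1)
    (a b d k : ℝ) :
    max (b - lam * ((F₁ b + F₂ d) - (F₁ a + F₂ b)) - k) 0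
      ≤ (max b k - k)
        - lam * ((F₁ (max b k) + F₂ (max d k)) - (F₁ (max a k) + F₂ (max b k))) := by
  have mono1 : Monotone F₁ :=
    monotone_of_deriv_nonneg (hF₁.differentiable one_ne_zero) hmono₁
  have anti2 : Antitone F₂ :=
    antitone_of_deriv_nonpos (hF₂.differentiable one_ne_zero) hmono₂
  have hφd : ∀ y : ℝ, HasDerivAt (fun y => y - lam * F₁ y + lam * F₂ y)
      (1 - lam * deriv F₁ y + lam * deriv F₂ y) y := by
    intro y
    exact ((hasDerivAt_id y).sub
        (((hF₁.differentiable one_ne_zero) y).hasDerivAt.const_mul lam)).add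
      (((hF₂.differentiable one_ne_zero) y).hasDerivAt.const_mul lam)
  have monoφ : Monotone (fun y => y - lam * F₁ y + lam * F₂ y) := by
    apply monotone_of_deriv_nonneg (fun y => (hφd y).differentiableAt)
    intro y
    rw [(hφd y).deriv]
    have := hCFL y
    rw [mul_sub] at this
    linarith
  have e2 : lam * F₁ a ≤ lam * F₁ (max a k) :=
    mul_le_mul_of_nonneg_left (mono1 (le_max_left a k)) hlam
  have e3 : lam * F₂ (max d k) ≤ lam * F₂ d :=
    mul_le_mul_of_nonneg_left (anti2 (le_max_left d k)) hlam
  have e2' : lam * F₁ k ≤ lam * F₁ (max a k) :=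
    mul_le_mul_of_nonneg_left (mono1 (le_max_right a k)) hlam
  have e3' : lam * F₂ (max d k) ≤ lam * F₂ k :=
    mul_le_mul_of_nonneg_left (anti2 (le_max_right d k)) hlam
  have e1 := monoφ (le_max_left b k)
  have e1' := monoφ (le_max_right b k)
  simp only at e1 e1'
  apply max_le
  · linarith
  · linarith

private lemma coreIneq (F₁ F₂ η : ℝ → ℝ) (hF₁ : ContDiff ℝ 1 F₁) (hF₂ : ContDiff ℝ 1 F₂)
    (hmono₁ : ∀ w, 0 ≤ deriv F₁ w) (hmono₂ : ∀ w, deriv F₂ w ≤ 0)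
    (hη : ContDiff ℝ 2 η) (hconv : ConvexOn ℝ Set.univ η)
    (lam : ℝ) (hlam : 0 ≤ lam) (hCFL : ∀ w, lam * (deriv F₁ w - deriv F₂ w) ≤ 1)
    (a b d : ℝ) :
    η (b - lam * ((F₁ b + F₂ d) - (F₁ a + F₂ b))) - η b
      + lam * ((∫ z in a..b, deriv η z * deriv F₁ z)
        + ∫ z in b..d, deriv η z * deriv F₂ z) ≤ 0 := by
  have h1' : ContDiff ℝ ((1:ℕ)+1) η := by exact_mod_cast hη
  rw [contDiff_succ_iff_deriv] at h1'
  have hdη : Differentiable ℝ η := h1'.1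
  have hη1 : ContDiff ℝ 1 (deriv η) := h1'.2.2
  have hdη' : Differentiable ℝ (deriv η) := hη1.differentiable one_ne_zero
  have hcη'' : Continuous (deriv (deriv η)) := hη1.continuous_deriv le_rfl
  -- nonnegativity of second derivative
  have hη'mono : Monotone (deriv η) := by
    have := hconv.monotoneOn_deriv (fun x _ => hdη x)
    rwa [monotoneOn_univ] at this
  have hη''nn : ∀ k, 0 ≤ deriv (deriv η) k := monoDerivNonneg hη'mono hdη'
  set h := b - lam * ((F₁ b + F₂ d) - (F₁ a + F₂ b)) with hh
  set L := min (min a b) (min d h) with hL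
  set R := max (max a b) (max d h) with hR
  have hLa : L ≤ a := le_trans (min_le_left _ _) (min_le_left a b)
  have hLb : L ≤ b := le_trans (min_le_left _ _) (min_le_right a b)
  have hLd : L ≤ d := le_trans (min_le_right _ _) (min_le_left d h)
  have hLh : L ≤ h := le_trans (min_le_right _ _) (min_le_right d h)
  have haR : a ≤ R := le_trans (le_max_left a b) (le_max_left _ _)
  have hbR : b ≤ R := le_trans (le_max_right a b) (le_max_left _ _)
  have hdR : d ≤ R := le_trans (le_max_left d h) (le_max_right _ _)
  have hhR : h ≤ R := le_trans (le_max_right d h) (le_max_right _ _)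
  have hLR : L ≤ R := le_trans hLa haR
  have hA := idA' η hη hLh hhR hLb hbR
  have hB1 := idB η F₁ hη hF₁ hLa haR hLb hbR
  have hB2 := idB η F₂ hη hF₂ hLb hbR hLd hdR
  -- continuity of the three integrands in k
  have hc0 : Continuous fun k : ℝ => deriv (deriv η) k * (max (h - k) 0 - max (b - k) 0) :=
    hcη''.mul (((continuous_const.sub continuous_id).max continuous_const).sub
      ((continuous_const.sub continuous_id).max continuous_const))
  have hc1 : Continuous fun k : ℝ => deriv (deriv η) k * (F₁ (max b k) - F₁ (max a k)) :=
    hcη''.mul ((((hF₁.differentiable one_ne_zero).continuous).comp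
      (continuous_const.max continuous_id)).sub
      (((hF₁.differentiable one_ne_zero).continuous).comp (continuous_const.max continuous_id)))
  have hc2 : Continuous fun k : ℝ => deriv (deriv η) k * (F₂ (max d k) - F₂ (max b k)) :=
    hcη''.mul ((((hF₂.differentiable one_ne_zero).continuous).comp
      (continuous_const.max continuous_id)).sub
      (((hF₂.differentiable one_ne_zero).continuous).comp (continuous_const.max continuous_id)))
  -- combine integrals
  have hcomb : (∫ k in L..R, deriv (deriv η) k * (max (h - k) 0 - max (b - k) 0))
      + lam * (∫ k in L..R, deriv (deriv η) k * (F₁ (max b k) - F₁ (max a k)))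
      + lam * (∫ k in L..R, deriv (deriv η) k * (F₂ (max d k) - F₂ (max b k)))
      = ∫ k in L..R, (deriv (deriv η) k * (max (h - k) 0 - max (b - k) 0)
          + lam * (deriv (deriv η) k * (F₁ (max b k) - F₁ (max a k)))
          + lam * (deriv (deriv η) k * (F₂ (max d k) - F₂ (max b k)))) := by
    rw [← intervalIntegral.integral_const_mul lam, ← intervalIntegral.integral_const_mul lam]
    rw [← intervalIntegral.integral_add (hc0.intervalIntegrable _ _)
      ((hc1.intervalIntegrable _ _).const_mul lam)]
    rw [← intervalIntegral.integral_add
      ((hc0.intervalIntegrable _ _).add ((hc1.intervalIntegrable _ _).const_mul lam))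
      ((hc2.intervalIntegrable _ _).const_mul lam)]
  -- pointwise nonpositivity
  have hpt : ∀ k : ℝ, (deriv (deriv η) k * (max (h - k) 0 - max (b - k) 0)
      + lam * (deriv (deriv η) k * (F₁ (max b k) - F₁ (max a k)))
      + lam * (deriv (deriv η) k * (F₂ (max d k) - F₂ (max b k)))) ≤ 0 := by
    intro k
    have hK := keyK F₁ F₂ hF₁ hF₂ hmono₁ hmono₂ lam hlam hCFL a b d k
    have hmb : max (b - k) 0 = max b k - k := by
      rcases le_total b k with hbk | hbk
      · rw [max_eq_right (by linarith), max_eq_right hbk]; ring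
      · rw [max_eq_left (by linarith), max_eq_left hbk]
    have hKK : (max (h - k) 0 - max (b - k) 0)
        + lam * (F₁ (max b k) - F₁ (max a k))
        + lam * (F₂ (max d k) - F₂ (max b k)) ≤ 0 := by
      rw [hmb]
      linarith [hK, hh.le, hh.ge]
    have hfactor : deriv (deriv η) k * (max (h - k) 0 - max (b - k) 0)
        + lam * (deriv (deriv η) k * (F₁ (max b k) - F₁ (max a k)))
        + lam * (deriv (deriv η) k * (F₂ (max d k) - F₂ (max b k)))
        = deriv (deriv η) k * ((max (h - k) 0 - max (b - k) 0)
          + lam * (F₁ (max b k) - F₁ (max a k))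
          + lam * (F₂ (max d k) - F₂ (max b k))) := by ring
    rw [hfactor]
    exact mul_nonpos_iff.mpr (Or.inl ⟨hη''nn k, hKK⟩)
  have hint : (∫ k in L..R, (deriv (deriv η) k * (max (h - k) 0 - max (b - k) 0)
      + lam * (deriv (deriv η) k * (F₁ (max b k) - F₁ (max a k)))
      + lam * (deriv (deriv η) k * (F₂ (max d k) - F₂ (max b k))))) ≤ 0 := by
    have hneg := intervalIntegral.integral_nonneg_of_forall (μ := MeasureTheory.volume)
      (f := fun k => -(deriv (deriv η) k * (max (h - k) 0 - max (b - k) 0)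
        + lam * (deriv (deriv η) k * (F₁ (max b k) - F₁ (max a k)))
        + lam * (deriv (deriv η) k * (F₂ (max d k) - F₂ (max b k))))) hLR
      (fun u => neg_nonneg.mpr (hpt u))
    rw [intervalIntegral.integral_neg] at hneg
    linarith
  -- assemble
  have hzero : h - b + lam * ((F₁ b - F₁ a) + (F₂ d - F₂ b)) = 0 := by
    rw [hh]; ring
  have hz2 : deriv η L * (h - b + lam * ((F₁ b - F₁ a) + (F₂ d - F₂ b))) = 0 := by
    rw [hzero]; ring
  rw [hA, hB1, hB2]
  rw [← hcomb] at hint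
  nlinarith [hint, hz2]


/-- Interior discrete entropy inequality (Lemma 5.1, first inequality): for every
convex entropy `η ∈ C²(ℝ)` with numerical entropy flux
`Q(u,v) = ∫_c^u η'(z) F₁'(z) dz + ∫_c^v η'(z) F₂'(z) dz`, every `j = 1,…,N-1`
and every `n = 0,…,M`, the solution of the scheme satisfies
`(η(u_j^{n+1}) - η(u_jⁿ))/Δt + (Q(u_jⁿ,u_{j+1}ⁿ) - Q(u_{j-1}ⁿ,u_jⁿ))/Δx - γ η'(u_j^{n+1}) P_jⁿ ≤ 0`. -/
theorem stmt_8 (N M : ℕ) (hN : 2 ≤ N) (T γ Δx Δt lam : ℝ)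
    (hT : 0 < T) (hγ : 0 < γ)
    (hΔx : Δx = 1 / N) (hΔt : Δt = T / (M + 1)) (hlam : lam = Δt / Δx)
    (F₁ F₂ : ℝ → ℝ) (hF₁ : ContDiff ℝ 1 F₁) (hF₂ : ContDiff ℝ 1 F₂)
    (hmono₁ : ∀ w, 0 ≤ deriv F₁ w) (hmono₂ : ∀ w, deriv F₂ w ≤ 0)
    (hCFL : ∀ w, lam * (deriv F₁ w - deriv F₂ w) ≤ 1)
    (u : ℕ → ℕ → ℝ) (P : ℕ → ℕ → ℝ)
    (hP : ∀ n j, P n j = Δx * (u n 0 / 2 + ∑ i ∈ Finset.Ico 1 j, u n i + u n j / 2))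
    (hscheme : ∀ n, n ≤ M → ∀ j, 1 ≤ j → j ≤ N - 1 →
      u (n + 1) j = u n j
        - lam * ((F₁ (u n j) + F₂ (u n (j + 1))) - (F₁ (u n (j - 1)) + F₂ (u n j)))
        + γ * Δt * P n j)
    (η : ℝ → ℝ) (hη : ContDiff ℝ 2 η) (hconv : ConvexOn ℝ Set.univ η)
    (c : ℝ) (Q : ℝ → ℝ → ℝ)
    (hQ : ∀ a b, Q a b = (∫ z in c..a, deriv η z * deriv F₁ z)
        + ∫ z in c..b, deriv η z * deriv F₂ z) :
    ∀ n, n ≤ M → ∀ j, 1 ≤ j → j ≤ N - 1 →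
      (η (u (n + 1) j) - η (u n j)) / Δt
        + (Q (u n j) (u n (j + 1)) - Q (u n (j - 1)) (u n j)) / Δx
        - γ * deriv η (u (n + 1) j) * P n j ≤ 0 := by
  intro n hn j hj1 hj2
  have hN0 : (0:ℝ) < N := by exact_mod_cast (by omega : 0 < N)
  have hΔx0 : 0 < Δx := by rw [hΔx]; positivity
  have hΔt0 : 0 < Δt := by
    rw [hΔt]
    have : (0:ℝ) < (M:ℝ) + 1 := by positivity
    positivity
  have hlam0 : 0 ≤ lam := by rw [hlam]; positivity
  set a := u n (j - 1) with ha
  set b := u n j with hb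
  set d := u n (j + 1) with hd
  set U := u (n + 1) j with hU
  have hsch := hscheme n hn j hj1 hj2
  have hcore := coreIneq F₁ F₂ η hF₁ hF₂ hmono₁ hmono₂ hη hconv lam hlam0 hCFL a b d
  set h := b - lam * ((F₁ b + F₂ d) - (F₁ a + F₂ b)) with hh
  have htan := tangentLine η hη hconv h U
  have hhU : h - U = -(γ * Δt * P n j) := by
    rw [hU, hsch]; ring
  -- continuity of integrands
  have h1' : ContDiff ℝ ((1:ℕ)+1) η := by exact_mod_cast hη
  rw [contDiff_succ_iff_deriv] at h1'
  have hcη' : Continuous (deriv η) := (h1'.2.2.differentiable (by simp)).continuous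
  have hcF₁' : Continuous (deriv F₁) := hF₁.continuous_deriv le_rfl
  have hcF₂' : Continuous (deriv F₂) := hF₂.continuous_deriv le_rfl
  have hQd : Q b d - Q a b = (∫ z in a..b, deriv η z * deriv F₁ z)
      + ∫ z in b..d, deriv η z * deriv F₂ z := by
    rw [hQ, hQ]
    have i1 : (∫ z in c..a, deriv η z * deriv F₁ z) + (∫ z in a..b, deriv η z * deriv F₁ z)
        = ∫ z in c..b, deriv η z * deriv F₁ z :=
      integral_add_adjacent_intervals ((hcη'.mul hcF₁').intervalIntegrable _ _)
        ((hcη'.mul hcF₁').intervalIntegrable _ _)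
    have i2 : (∫ z in c..b, deriv η z * deriv F₂ z) + (∫ z in b..d, deriv η z * deriv F₂ z)
        = ∫ z in c..d, deriv η z * deriv F₂ z :=
      integral_add_adjacent_intervals ((hcη'.mul hcF₂').intervalIntegrable _ _)
        ((hcη'.mul hcF₂').intervalIntegrable _ _)
    linarith
  set S := (∫ z in a..b, deriv η z * deriv F₁ z) + ∫ z in b..d, deriv η z * deriv F₂ z with hS
  -- numerator inequality
  have hnum : η U - η b + lam * S - γ * Δt * deriv η U * P n j ≤ 0 := by
    have h1 : η U + deriv η U * (-(γ * Δt * P n j)) ≤ η h := by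
      rw [← hhU]; exact htan
    have h2 : η h - η b + lam * S ≤ 0 := hcore
    nlinarith [h1, h2]
  have hrw : (η U - η b) / Δt + (Q b d - Q a b) / Δx - γ * deriv η U * P n j
      = (η U - η b + lam * S - γ * Δt * deriv η U * P n j) / Δt := by
    rw [hQd, hlam]
    field_simp
  rw [hrw]
  exact div_nonpos_iff.mpr (Or.inr ⟨hnum, hΔt0.le⟩)
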